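/- Let K ⊆ ℝⁿ be a compact set with nonempty interior equipped with the Lebesgue measure (weight w ≡ 1), let f be an n-variate real polynomial, and let φ : ℝⁿ → ℝⁿ, φ(x) = Ux + c, be a nonsingular affine transformation (U invertible). Set g := f ∘ φ⁻¹. Then for every r ∈ ℕ: f^{(r)}_{K} − min_{x∈K} f(x) = g^{(r)}_{φ(K)} − min_{y∈φ(K)} g(y). -/

import Mathlib

open MeasureTheory

noncomputable section

/-- A polynomial is a sum of squares. -/
def IsSOS {n : ℕ} (q : MvPolynomial (Fin n) ℝ) : Prop :=
  ∃ (m : ℕ) (p : Fin m → MvPolynomial (Fin n) ℝ), q = ∑ i, p i ^ 2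

/-- The Lasserre measure-based upper bound `f^{(r)}_{K,w}`: the infimum of
`∫_K f q w dx` over sum-of-squares polynomials `q` of degree at most `2r`
with `∫_K q w dx = 1`. -/
noncomputable def lasserre {n : ℕ} (r : ℕ) (K : Set (EuclideanSpace ℝ (Fin n)))
    (w f : EuclideanSpace ℝ (Fin n) → ℝ) : ℝ :=
  sInf { v : ℝ | ∃ q : MvPolynomial (Fin n) ℝ, IsSOS q ∧ q.totalDegree ≤ 2 * r ∧
    (∫ x in K, MvPolynomial.eval (fun i => x i) q * w x) = 1 ∧
    v = ∫ x in K, f x * MvPolynomial.eval (fun i => x i) q * w x }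

/-- The error `E^{(r)}_{K,w}(f) = f^{(r)}_{K,w} - min_{x ∈ K} f(x)`. -/
noncomputable def lasserreError {n : ℕ} (r : ℕ) (K : Set (EuclideanSpace ℝ (Fin n)))
    (w f : EuclideanSpace ℝ (Fin n) → ℝ) : ℝ :=
  lasserre r K w f - sInf (f '' K)

namespace S13

open MvPolynomial

variable {n : ℕ}

local notation "E" => EuclideanSpace ℝ (Fin n)

lemma euc_sum_apply (m : Finset (Fin n)) (v : Fin n → E) (k : Fin n) :
    (∑ j ∈ m, v j) k = ∑ j ∈ m, v j k := by
  induction m using Finset.cons_induction with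
  | empty => rfl
  | cons a s ha ih => rw [Finset.sum_cons, Finset.sum_cons, ← ih]; rfl

lemma coord_linear (T : E →ₗ[ℝ] E) (x : E) (i : Fin n) :
    T x i = ∑ j, x j * T (EuclideanSpace.single j 1) i := by
  have hx : x = ∑ j, x j • EuclideanSpace.single j (1:ℝ) := by
    ext k
    rw [euc_sum_apply]
    simp [EuclideanSpace.single_apply]
  conv_lhs => rw [hx]
  rw [map_sum, euc_sum_apply]
  simp

/-- substitution polynomials representing `y ↦ T y + b` coordinatewise -/
def subP (T : E →ₗ[ℝ] E) (b : E) : Fin n → MvPolynomial (Fin n) ℝ :=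
  fun i => (∑ j, C (T (EuclideanSpace.single j 1) i) * X j) + C (b i)

lemma subP_eval (T : E →ₗ[ℝ] E) (b : E) (y : E) (i : Fin n) :
    eval (fun j => y j) (subP T b i) = T y i + b i := by
  simp [subP, coord_linear T y i, mul_comm]

lemma subP_deg (T : E →ₗ[ℝ] E) (b : E) (i : Fin n) : (subP T b i).totalDegree ≤ 1 := by
  refine (totalDegree_add _ _).trans ?_
  simp only [max_le_iff]
  constructor
  · refine (totalDegree_finset_sum _ _).trans ?_
    apply Finset.sup_le
    intro j _
    refine (totalDegree_mul _ _).trans ?_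
    simp [totalDegree_X]
  · simp


lemma eval_bind₁' (g : Fin n → ℝ) (L : Fin n → MvPolynomial (Fin n) ℝ)
    (q : MvPolynomial (Fin n) ℝ) :
    eval g (bind₁ L q) = eval (fun i => eval g (L i)) q := by
  simpa using eval₂Hom_bind₁ (RingHom.id ℝ) g L q

lemma deg_bind₁ (L : Fin n → MvPolynomial (Fin n) ℝ) (hL : ∀ i, (L i).totalDegree ≤ 1)
    (q : MvPolynomial (Fin n) ℝ) :
    (bind₁ L q).totalDegree ≤ q.totalDegree := by
  conv_lhs => rw [q.as_sum]
  rw [map_sum]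
  refine (totalDegree_finset_sum _ _).trans (Finset.sup_le ?_)
  intro v hv
  rw [bind₁, aeval_monomial]
  refine (totalDegree_mul _ _).trans ?_
  have h1 : (algebraMap ℝ (MvPolynomial (Fin n) ℝ) (coeff v q)).totalDegree = 0 := by
    simp [MvPolynomial.algebraMap_eq]
  rw [h1, zero_add]
  rw [Finsupp.prod]
  refine (totalDegree_finset_prod _ _).trans ?_
  calc ∑ i ∈ v.support, (L i ^ v i).totalDegree
      ≤ ∑ i ∈ v.support, v i * 1 :=
        Finset.sum_le_sum (fun j _ =>
          (totalDegree_pow _ _).trans (Nat.mul_le_mul_left _ (hL j)))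
    _ = v.sum fun _ e => e := by simp [Finsupp.sum]
    _ ≤ q.totalDegree := le_totalDegree hv

lemma sos_bind {q : MvPolynomial (Fin n) ℝ} (h : IsSOS q)
    (L : Fin n → MvPolynomial (Fin n) ℝ) : IsSOS (bind₁ L q) := by
  obtain ⟨m, p, rfl⟩ := h
  exact ⟨m, fun i => bind₁ L (p i), by simp⟩

lemma sos_C_mul {a : ℝ} (ha : 0 ≤ a) {q : MvPolynomial (Fin n) ℝ} (h : IsSOS q) :
    IsSOS (C a * q) := by
  obtain ⟨m, p, rfl⟩ := h
  refine ⟨m, fun i => C (Real.sqrt a) * p i, ?_⟩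
  rw [Finset.mul_sum]
  refine Finset.sum_congr rfl fun i _ => ?_
  rw [mul_pow, ← C_pow, Real.sq_sqrt ha]

lemma incl (r : ℕ) (K : Set (EuclideanSpace ℝ (Fin n))) (hK : MeasurableSet K)
    (F G : EuclideanSpace ℝ (Fin n) → ℝ)
    (U : EuclideanSpace ℝ (Fin n) ≃ₗ[ℝ] EuclideanSpace ℝ (Fin n))
    (c : EuclideanSpace ℝ (Fin n))
    (hFG : ∀ x, G (U x + c) = F x) :
    { v : ℝ | ∃ q : MvPolynomial (Fin n) ℝ, IsSOS q ∧ q.totalDegree ≤ 2 * r ∧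
      (∫ x in K, eval (fun i => x i) q * 1) = 1 ∧
      v = ∫ x in K, F x * eval (fun i => x i) q * 1 } ⊆
    { v : ℝ | ∃ q : MvPolynomial (Fin n) ℝ, IsSOS q ∧ q.totalDegree ≤ 2 * r ∧
      (∫ y in (fun x => U x + c) '' K, eval (fun i => y i) q * 1) = 1 ∧
      v = ∫ y in (fun x => U x + c) '' K, G y * eval (fun i => y i) q * 1 } := by
  rintro v ⟨q, hsos, hdeg, hint, rfl⟩
  set D : ℝ := |LinearMap.det (U.toLinearMap)| with hDdef
  have hDne : LinearMap.det U.toLinearMap ≠ 0 := U.isUnit_det'.ne_zero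
  have hD : 0 < D := abs_pos.mpr hDne
  set L := subP (U.symm.toLinearMap) (-(U.symm c)) with hLdef
  have hLdeg : ∀ i, (L i).totalDegree ≤ 1 := fun i => subP_deg _ _ i
  set q' : MvPolynomial (Fin n) ℝ := C D⁻¹ * bind₁ L q with hq'def
  have hq'eval : ∀ y : EuclideanSpace ℝ (Fin n),
      eval (fun i => y i) q' = D⁻¹ * eval (fun i => U.symm (y - c) i) q := by
    intro y
    rw [hq'def, eval_mul, eval_C, eval_bind₁']
    have harg : (fun i => eval (fun j => y j) (L i)) =
        fun i => U.symm (y - c) i := by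
      funext i
      rw [hLdef, subP_eval]
      have h2 : U.symm (y - c) = U.symm y - U.symm c := map_sub _ _ _
      rw [h2]
      rfl
    rw [harg]
  -- change of variables
  have hder : ∀ x ∈ K, HasFDerivWithinAt (fun x => U x + c)
      ((U.toContinuousLinearEquiv :
        EuclideanSpace ℝ (Fin n) →L[ℝ] EuclideanSpace ℝ (Fin n))) K x := by
    intro x _
    exact ((U.toContinuousLinearEquiv :
      EuclideanSpace ℝ (Fin n) →L[ℝ] EuclideanSpace ℝ (Fin n)).hasFDerivAt.add_const
        c).hasFDerivWithinAt
  have hinj : Set.InjOn (fun x => U x + c) K := by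
    intro a _ b _ h
    exact U.injective (add_right_cancel h)
  have hdet : |((U.toContinuousLinearEquiv : EuclideanSpace ℝ (Fin n) →L[ℝ] EuclideanSpace ℝ (Fin n))).det| = D := by
    rw [hDdef]
    congr 1
  have hcov : ∀ g : EuclideanSpace ℝ (Fin n) → ℝ, (∫ y in (fun x => U x + c) '' K, g y) =
      ∫ x in K, D * g (U x + c) := by
    intro g
    rw [integral_image_eq_integral_abs_det_fderiv_smul volume hK hder hinj g]
    simp_rw [hdet, smul_eq_mul]
  have hsimp : ∀ (x : EuclideanSpace ℝ (Fin n)) (a : ℝ),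
      D * (a * eval (fun i => (U x + c) i) q' * 1) = a * eval (fun i => x i) q * 1 := by
    intro x a
    rw [hq'eval]
    have h3 : U x + c - c = U x := add_sub_cancel_right _ _
    rw [h3, U.symm_apply_apply]
    field_simp
  refine ⟨q', sos_C_mul (inv_nonneg.mpr hD.le) (sos_bind hsos L), ?_, ?_, ?_⟩
  · refine (totalDegree_mul _ _).trans ?_
    simpa [totalDegree_C] using (deg_bind₁ L hLdeg q).trans hdeg
  · rw [hcov]
    have : ∀ x : EuclideanSpace ℝ (Fin n), D * (eval (fun i => (U x + c) i) q' * 1) = eval (fun i => x i) q * 1 := by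
      intro x
      simpa using hsimp x 1
    simp_rw [this]
    exact hint
  · rw [hcov]
    refine setIntegral_congr_fun hK fun x _ => ?_
    simp only
    rw [← hFG x]
    exact (hsimp x (G (U x + c))).symm

end S13

/-- Lemma (affine invariance): for a nonsingular affine transformation
`φ(x) = U x + c` of `ℝⁿ` and `g := f ∘ φ⁻¹`, the Lasserre errors of `f` on `K` and of
`g` on `φ(K)` (both w.r.t. the Lebesgue measure) coincide for every order `r`. -/
theorem stmt13 {n : ℕ}
    (K : Set (EuclideanSpace ℝ (Fin n)))
    (hKc : IsCompact K) (hKi : (interior K).Nonempty)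
    (f : MvPolynomial (Fin n) ℝ)
    (F : EuclideanSpace ℝ (Fin n) → ℝ)
    (hF : ∀ x : EuclideanSpace ℝ (Fin n), F x = MvPolynomial.eval (fun i => x i) f)
    (U : EuclideanSpace ℝ (Fin n) ≃ₗ[ℝ] EuclideanSpace ℝ (Fin n))
    (c : EuclideanSpace ℝ (Fin n))
    (φ : EuclideanSpace ℝ (Fin n) → EuclideanSpace ℝ (Fin n))
    (hφ : ∀ x, φ x = U x + c)
    (G : EuclideanSpace ℝ (Fin n) → ℝ)
    (hG : ∀ y, G y = F (U.symm (y - c))) :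
    ∀ r : ℕ,
      lasserre r K (fun _ => 1) F - sInf (F '' K) =
        lasserre r (φ '' K) (fun _ => 1) G - sInf (G '' (φ '' K)) := by
  intro r
  have hφeq : φ = fun x => U x + c := funext hφ
  have hGF : ∀ x, G (U x + c) = F x := by
    intro x
    rw [hG]
    congr 1
    rw [add_sub_cancel_right, U.symm_apply_apply]
  have hKm : MeasurableSet K := hKc.measurableSet
  have hφcont : Continuous φ := by
    rw [hφeq]
    exact (U.toLinearMap.continuous_of_finiteDimensional).add continuous_const
  have hK'm : MeasurableSet (φ '' K) := (hKc.image hφcont).measurableSet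
  have hrev : ∀ y, F (U.symm y + -(U.symm c)) = G y := by
    intro y
    rw [hG, map_sub, sub_eq_add_neg]
  have himg2 : (fun y => U.symm y + -(U.symm c)) '' (φ '' K) = K := by
    rw [hφeq, Set.image_image]
    have h : ∀ x : EuclideanSpace ℝ (Fin n), U.symm (U x + c) + -(U.symm c) = x := by
      intro x
      rw [map_add, U.symm_apply_apply, add_assoc, add_neg_cancel, add_zero]
    simp only [h, Set.image_id']
  have hsub1 := S13.incl r K hKm F G U c hGF
  have hsub2 := S13.incl r (φ '' K) hK'm G F U.symm (-(U.symm c)) hrev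
  rw [himg2] at hsub2
  rw [← hφeq] at hsub1
  have h1 : lasserre r K (fun _ => 1) F = lasserre r (φ '' K) (fun _ => 1) G := by
    unfold lasserre
    congr 1
    exact subset_antisymm hsub1 hsub2
  have himg : G '' (φ '' K) = F '' K := by
    rw [hφeq, Set.image_image]
    exact Set.image_congr' hGF
  rw [h1, himg]
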